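/- For natural numbers m, n ≥ 0 and 0 ≤ r ≤ m, the following identity of rational functions in x, p, q holds: ∑_{k=0}^{m} (-1)^k p^{k(k+1)/2 - rk} / ((p;p)_k (p;p)_{m-k} (x p^k; q)_{n+1}) = x^r · ∑_{k=0}^{n} (-1)^k q^{k(k+1)/2 + rk} / ((q;q)_k (q;q)_{n-k} (x q^k; p)_{m+1}). -/

import Mathlib

/-- The q-Pochhammer symbol `(a;q)_n = ∏_{j=0}^{n-1} (1 - a q^j)`. -/
noncomputable def qPoch (a q : ℂ) (n : ℕ) : ℂ := ∏ j ∈ Finset.range n, (1 - a * q ^ j)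

lemma qPoch_zero (a q : ℂ) : qPoch a q 0 = 1 := by simp [qPoch]

lemma qPoch_succ (a q : ℂ) (n : ℕ) : qPoch a q (n+1) = qPoch a q n * (1 - a * q ^ n) := by
  simp [qPoch, Finset.prod_range_succ]

lemma qPoch_succ' (a q : ℂ) (n : ℕ) : qPoch a q (n+1) = (1 - a) * qPoch (a*q) q n := by
  rw [qPoch, Finset.prod_range_succ', qPoch, mul_comm]
  simp only [pow_zero, mul_one]
  congr 1
  exact Finset.prod_congr rfl fun i _ => by ring

lemma qPoch_pp_ne_zero (p : ℂ) (hp1 : ∀ j, 1 ≤ j → p ^ j ≠ 1) (k : ℕ) : qPoch p p k ≠ 0 := by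
  rw [qPoch]
  apply Finset.prod_ne_zero_iff.mpr
  intro j _
  have := hp1 (j+1) (by omega)
  intro h
  apply this
  have : p * p ^ j = 1 := by linear_combination -h
  rw [pow_succ, mul_comm]
  exact this

noncomputable def gb (p : ℂ) : ℕ → ℕ → ℂ
  | _, 0 => 1
  | 0, _+1 => 0
  | m+1, k+1 => gb p m k + p^(k+1) * gb p m (k+1)

lemma gb_eq_zero (p : ℂ) : ∀ m k, m < k → gb p m k = 0 := by
  intro m
  induction m with
  | zero => intro k hk; match k, hk with | k+1, _ => rfl
  | succ m ih =>
    intro k hk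
    match k, hk with
    | k+1, hk =>
      show gb p m k + p^(k+1) * gb p m (k+1) = 0
      rw [ih k (by omega), ih (k+1) (by omega)]
      ring

lemma gb_mul (p : ℂ) : ∀ m k, k ≤ m →
    gb p m k * (qPoch p p k * qPoch p p (m - k)) = qPoch p p m := by
  intro m
  induction m with
  | zero =>
    intro k hk
    interval_cases k
    simp [gb, qPoch_zero]
  | succ m ih =>
    intro k hk
    match k with
    | 0 =>
      show (1:ℂ) * _ = _
      simp [gb, qPoch_zero]
    | k+1 =>
      show (gb p m k + p^(k+1) * gb p m (k+1)) * _ = _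
      by_cases hkm : k + 1 ≤ m
      · have h1 := ih k (by omega)
        have h2 := ih (k+1) hkm
        have e1 : m + 1 - (k+1) = m - k := by omega
        have e2 : m - k = (m - (k+1)) + 1 := by omega
        rw [e2, qPoch_succ p p (m - (k+1))] at h1
        rw [qPoch_succ p p k] at h2
        rw [e1, e2, qPoch_succ p p (m - (k+1)), qPoch_succ p p k, qPoch_succ p p m]
        have e4 : (p * p^k) * (p * p^(m-(k+1))) = p * p^m := by
          rw [show p * p^k = p^(k+1) from (pow_succ' p k).symm,
              show p * p^(m-(k+1)) = p^(m-k) from by rw [← pow_succ']; congr 1; omega,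
              ← pow_add, ← pow_succ']
          congr 1
          omega
        have e5 : p^(k+1) = p * p^k := (pow_succ' p k)
        rw [e5]
        linear_combination (1 - p*p^k) * h1 + ((p*p^k) * (1 - p*p^(m-(k+1)))) * h2
          - qPoch p p m * e4
      · have hk' : k = m := by omega
        rw [hk', gb_eq_zero p m (m+1) (by omega)]
        have h1 := ih m le_rfl
        have e1 : m + 1 - (m+1) = 0 := by omega
        have e2 : m - m = 0 := by omega
        rw [e2, qPoch_zero] at h1
        rw [e1, qPoch_zero, qPoch_succ p p m]
        linear_combination (1 - p*p^m) * h1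

lemma gb_zero (p : ℂ) (m : ℕ) : gb p m 0 = 1 := by cases m <;> rfl

lemma qbin (p : ℂ) : ∀ m (w : ℂ),
    ∑ k ∈ Finset.range (m+1), (-1:ℂ)^k * p^(k*(k+1)/2) * w^k * gb p m k
      = qPoch (p*w) p m := by
  intro m
  induction m with
  | zero => intro w; simp [gb_zero, qPoch_zero]
  | succ m ih =>
    intro w
    have tri : ∀ k:ℕ, (k+1)*(k+1+1)/2 = k*(k+1)/2 + (k+1) := by
      intro k
      obtain ⟨c, hc⟩ := Nat.even_mul_succ_self k
      have h2 : (k+1)*(k+1+1) = k*(k+1) + 2*(k+1) := by ring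
      omega
    rw [Finset.sum_range_succ']
    have split : ∀ k ∈ Finset.range (m+1),
        (-1:ℂ)^(k+1) * p^((k+1)*(k+1+1)/2) * w^(k+1) * gb p (m+1) (k+1)
        = -(p*w) * ((-1:ℂ)^k * p^(k*(k+1)/2) * (p*w)^k * gb p m k)
          + (-1:ℂ)^(k+1) * p^((k+1)*(k+1+1)/2) * (p*w)^(k+1) * gb p m (k+1) := by
      intro k _
      show (-1:ℂ)^(k+1) * p^((k+1)*(k+1+1)/2) * w^(k+1)
            * (gb p m k + p^(k+1) * gb p m (k+1)) = _
      rw [tri k]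
      ring
    rw [Finset.sum_congr rfl split, Finset.sum_add_distrib, ← Finset.mul_sum, ih (p*w)]
    have hshift : ∑ k ∈ Finset.range (m+1),
        (-1:ℂ)^(k+1) * p^((k+1)*(k+1+1)/2) * (p*w)^(k+1) * gb p m (k+1)
        = qPoch (p*(p*w)) p m - 1 := by
      have h2 : ∑ k ∈ Finset.range (m+2),
          (-1:ℂ)^k * p^(k*(k+1)/2) * (p*w)^k * gb p m k
          = qPoch (p*(p*w)) p m := by
        rw [Finset.sum_range_succ, gb_eq_zero p m (m+1) (by omega), ← ih (p*w)]
        ring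
      rw [Finset.sum_range_succ'] at h2
      simp only [pow_zero, one_mul, mul_one, Nat.zero_mul, Nat.zero_div, gb_zero] at h2
      linear_combination h2
    rw [hshift, qPoch_succ', gb_zero]
    have : (p*w)*p = p*(p*w) := by ring
    rw [this]
    ring

lemma vanish (p : ℂ) (hp : p ≠ 0) (hp1 : ∀ j, 1 ≤ j → p ^ j ≠ 1) (m s : ℕ)
    (hs1 : 1 ≤ s) (hs2 : s ≤ m) :
    ∑ k ∈ Finset.range (m+1),
      (-1:ℂ)^k * p^(((k*(k+1)/2 : ℕ) : ℤ) - (s:ℤ)*k) / (qPoch p p k * qPoch p p (m-k)) = 0 := by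
  have key : ∀ k ∈ Finset.range (m+1),
      (-1:ℂ)^k * p^(((k*(k+1)/2 : ℕ) : ℤ) - (s:ℤ)*k) / (qPoch p p k * qPoch p p (m-k))
      = ((-1:ℂ)^k * p^(k*(k+1)/2) * (p^(-(s:ℤ)))^k * gb p m k) / qPoch p p m := by
    intro k hk
    rw [Finset.mem_range] at hk
    have hgb := gb_mul p m k (by omega)
    have h1 := qPoch_pp_ne_zero p hp1 k
    have h2 := qPoch_pp_ne_zero p hp1 (m-k)
    have h3 := qPoch_pp_ne_zero p hp1 m
    have hzp : (p:ℂ)^(((k*(k+1)/2 : ℕ) : ℤ) - (s:ℤ)*k) = p^(k*(k+1)/2) * (p^(-(s:ℤ)))^k := by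
      rw [← zpow_natCast p (k*(k+1)/2), ← zpow_natCast (p ^ (-(s:ℤ))) k, ← zpow_mul,
        ← zpow_add₀ hp]
      congr 1
      ring
    rw [hzp]
    rw [div_eq_div_iff (by exact mul_ne_zero h1 h2) h3]
    linear_combination (-((-1:ℂ)^k * p^(k*(k+1)/2) * (p^(-(s:ℤ)))^k)) * hgb
  rw [Finset.sum_congr rfl key, ← Finset.sum_div, qbin p m (p^(-(s:ℤ)))]
  have hz : qPoch (p * p^(-(s:ℤ))) p m = 0 := by
    rw [qPoch]
    apply Finset.prod_eq_zero (Finset.mem_range.mpr (show s-1 < m by omega))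
    have he : p * p^(-(s:ℤ)) * p^((s-1 : ℕ)) = 1 := by
      rw [← zpow_natCast p (s-1), show (p:ℂ) * p^(-(s:ℤ)) = p^(1 + -(s:ℤ)) from by
        rw [zpow_add₀ hp, zpow_one], ← zpow_add₀ hp]
      have : (1 + -(s:ℤ)) + ((s-1 : ℕ) : ℤ) = 0 := by
        have : ((s-1 : ℕ) : ℤ) = (s:ℤ) - 1 := by omega
        omega
      rw [this, zpow_zero]
    rw [he]
    ring
  rw [hz, zero_div]

lemma zpow_ne_one (q : ℂ) (hq : q ≠ 0) (hq1 : ∀ j, 1 ≤ j → q ^ j ≠ 1) :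
    ∀ d : ℤ, d ≠ 0 → q ^ d ≠ 1 := by
  intro d hd h
  rcases lt_trichotomy d 0 with h1|h1|h1
  · have h0 : q^(-d) = 1 := by rw [zpow_neg, h, inv_one]
    have h2 : q^((-d).toNat) = 1 := by
      rw [← zpow_natCast, Int.toNat_of_nonneg (by omega)]; exact h0
    exact hq1 _ (by omega) h2
  · exact hd h1
  · have h2 : q^(d.toNat) = 1 := by
      rw [← zpow_natCast, Int.toNat_of_nonneg (by omega)]; exact h
    exact hq1 _ (by omega) h2

lemma erase_split (n i : ℕ) (hi : i ≤ n) :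
    (Finset.range (n+1)).erase i = Finset.range i ∪ Finset.Ico (i+1) (n+1) := by
  ext j
  simp only [Finset.mem_erase, Finset.mem_range, Finset.mem_union, Finset.mem_Ico]
  omega

lemma sum_range_succ_id (i : ℕ) : ∑ j ∈ Finset.range i, (j+1) = i*(i+1)/2 := by
  have h1 : ∑ j ∈ Finset.range (i+1), j = ∑ j ∈ Finset.range i, (j+1) := by
    rw [Finset.sum_range_succ']
    simp
  have h2 := Finset.sum_range_id_mul_two (i+1)
  rw [h1] at h2
  have h3 : (i+1) * (i+1-1) = i*(i+1) := by rw [Nat.add_sub_cancel]; ring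
  omega

lemma erase_prod (q : ℂ) (hq : q ≠ 0) (n i : ℕ) (hi : i ≤ n) :
    ∏ j ∈ (Finset.range (n+1)).erase i, (1 - q^((j:ℤ) - (i:ℤ)))
      = (-1:ℂ)^i * (q⁻¹)^(i*(i+1)/2) * (qPoch q q i * qPoch q q (n-i)) := by
  rw [erase_split n i hi, Finset.prod_union (by
    rw [Finset.disjoint_left]
    intro a ha hb
    simp only [Finset.mem_range] at ha
    simp only [Finset.mem_Ico] at hb
    omega)]
  have hP1 : ∏ j ∈ Finset.range i, (1 - q^((j:ℤ) - (i:ℤ)))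
      = (-1:ℂ)^i * (q⁻¹)^(i*(i+1)/2) * qPoch q q i := by
    rw [← Finset.prod_range_reflect (fun j => (1:ℂ) - q^((j:ℤ) - (i:ℤ))) i]
    have step : ∀ j ∈ Finset.range i,
        (1 - q^(((i - 1 - j : ℕ):ℤ) - (i:ℤ))) = -1 * ((q⁻¹)^(j+1)) * (1 - q * q^j) := by
      intro j hj
      rw [Finset.mem_range] at hj
      have he : ((i - 1 - j : ℕ):ℤ) - (i:ℤ) = -((j:ℤ)+1) := by omega
      rw [he]
      have h2 : (q⁻¹)^(j+1) = q^(-((j:ℤ)+1)) := by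
        rw [show -((j:ℤ)+1) = -((j+1:ℕ):ℤ) from by push_cast; ring, zpow_neg, zpow_natCast,
          inv_pow]
      rw [← h2]
      have hii : q^(j+1) * (q⁻¹)^(j+1) = 1 := by
        rw [← mul_pow, mul_inv_cancel₀ hq, one_pow]
      have hq1j : q * q^j = q^(j+1) := by rw [pow_succ]; ring
      rw [hq1j]
      linear_combination -hii
    rw [Finset.prod_congr rfl step]
    rw [Finset.prod_mul_distrib, Finset.prod_mul_distrib, Finset.prod_const,
      Finset.prod_pow_eq_pow_sum, sum_range_succ_id, Finset.card_range]
    rfl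
  have hP2 : ∏ j ∈ Finset.Ico (i+1) (n+1), (1 - q^((j:ℤ) - (i:ℤ))) = qPoch q q (n-i) := by
    rw [Finset.prod_Ico_eq_prod_range]
    have he : n + 1 - (i+1) = n - i := by omega
    rw [he, qPoch]
    apply Finset.prod_congr rfl
    intro j _
    congr 1
    have he2 : ((i + 1 + j : ℕ):ℤ) - (i:ℤ) = ((j:ℤ)+1) := by omega
    rw [he2, show ((j:ℤ)+1) = ((j+1 : ℕ):ℤ) from by push_cast; ring, zpow_natCast, pow_succ]
    ring
  rw [hP1, hP2]
  ring

lemma pf (q x : ℂ) (hq : q ≠ 0) (hq1 : ∀ j, 1 ≤ j → q ^ j ≠ 1) (n : ℕ) :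
    ∑ j ∈ Finset.range (n+1),
      ((-1:ℂ)^j * q^(j*(j+1)/2) / (qPoch q q j * qPoch q q (n-j)))
        * ∏ i ∈ (Finset.range (n+1)).erase j, (1 - x * q^i) = 1 := by
  have hinj : Set.InjOn (fun j : ℕ => (q⁻¹)^j) (Finset.range (n+1)) := by
    intro a _ b _ hab
    by_contra hne
    apply zpow_ne_one q hq hq1 ((a:ℤ) - (b:ℤ)) (by omega)
    rw [zpow_sub₀ hq, zpow_natCast, zpow_natCast, div_eq_mul_inv, ← inv_pow]
    have h2 : (q⁻¹)^a = (q⁻¹)^b := hab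
    rw [← h2, ← mul_pow, mul_inv_cancel₀ hq, one_pow]
  have hsb := Lagrange.sum_basis hinj ⟨0, by simp⟩
  have hev := congrArg (Polynomial.eval x) hsb
  rw [Polynomial.eval_finset_sum, Polynomial.eval_one] at hev
  refine Eq.trans (Finset.sum_congr rfl ?_) hev
  intro j hj
  rw [Finset.mem_range] at hj
  rw [Lagrange.basis, Polynomial.eval_prod]
  have term : ∀ i ∈ (Finset.range (n+1)).erase j,
      Polynomial.eval x (Lagrange.basisDivisor ((q⁻¹)^j) ((q⁻¹)^i))
        = (1 - q^((i:ℤ) - (j:ℤ)))⁻¹ * (1 - x * q^i) := by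
    intro i hi
    rw [Finset.mem_erase, Finset.mem_range] at hi
    have hne : (1:ℂ) - q^((i:ℤ) - (j:ℤ)) ≠ 0 := by
      intro h0
      exact zpow_ne_one q hq hq1 ((i:ℤ) - (j:ℤ)) (by omega) (by linear_combination -h0)
    have hWq : q^((i:ℤ) - (j:ℤ)) = q^i * (q⁻¹)^j := by
      rw [zpow_sub₀ hq, zpow_natCast, zpow_natCast, div_eq_mul_inv, ← inv_pow]
    have hii : q^i * (q⁻¹)^i = 1 := by rw [← mul_pow, mul_inv_cancel₀ hq, one_pow]
    have he1 : (q⁻¹)^j - (q⁻¹)^i = -((q⁻¹)^i) * (1 - q^((i:ℤ) - (j:ℤ))) := by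
      rw [hWq]
      linear_combination -(q⁻¹)^j * hii
    have he2 : x - (q⁻¹)^i = -((q⁻¹)^i) * (1 - x * q^i) := by
      linear_combination -x * hii
    rw [Lagrange.basisDivisor, Polynomial.eval_mul, Polynomial.eval_C, Polynomial.eval_sub,
      Polynomial.eval_X, Polynomial.eval_C, he1, he2]
    have hqi : ((q:ℂ)⁻¹)^i ≠ 0 := pow_ne_zero _ (inv_ne_zero hq)
    have hX : -((q:ℂ)⁻¹)^i ≠ 0 := neg_ne_zero.mpr hqi
    rw [mul_inv, mul_mul_mul_comm, inv_mul_cancel₀ hX, one_mul]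
  rw [Finset.prod_congr rfl term, Finset.prod_mul_distrib, Finset.prod_inv_distrib,
    erase_prod q hq n j (by omega)]
  have h1 := qPoch_pp_ne_zero q hq1 j
  have h2 := qPoch_pp_ne_zero q hq1 (n-j)
  have hiq : ((q:ℂ)⁻¹)^(j*(j+1)/2) ≠ 0 := pow_ne_zero _ (inv_ne_zero hq)
  have hii : q^(j*(j+1)/2) * (q⁻¹)^(j*(j+1)/2) = 1 := by
    rw [← mul_pow, mul_inv_cancel₀ hq, one_pow]
  rw [mul_inv, mul_inv]
  have hneg : ((-1:ℂ)^j)⁻¹ = (-1:ℂ)^j := by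
    rw [← inv_pow]; norm_num
  rw [hneg]
  rw [div_eq_mul_inv, mul_inv]
  field_simp
  linear_combination (∏ x_1 ∈ (Finset.range (n+1)).erase j, (1 - x * q ^ x_1)) * hii

lemma pf_div (q x : ℂ) (hq : q ≠ 0) (hq1 : ∀ j, 1 ≤ j → q ^ j ≠ 1) (n : ℕ)
    (hx : qPoch x q (n+1) ≠ 0) :
    (qPoch x q (n+1))⁻¹
      = ∑ j ∈ Finset.range (n+1),
          ((-1:ℂ)^j * q^(j*(j+1)/2) / (qPoch q q j * qPoch q q (n-j))) * (1 - x * q^j)⁻¹ := by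
  have hx' : ∀ j ∈ Finset.range (n+1), (1:ℂ) - x * q^j ≠ 0 := by
    rw [qPoch] at hx
    exact Finset.prod_ne_zero_iff.mp hx
  have key : ∀ j ∈ Finset.range (n+1),
      ((-1:ℂ)^j * q^(j*(j+1)/2) / (qPoch q q j * qPoch q q (n-j))) * (1 - x * q^j)⁻¹
        * qPoch x q (n+1)
      = ((-1:ℂ)^j * q^(j*(j+1)/2) / (qPoch q q j * qPoch q q (n-j)))
        * ∏ i ∈ (Finset.range (n+1)).erase j, (1 - x * q^i) := by
    intro j hj
    have hsp : (∏ i ∈ (Finset.range (n+1)).erase j, (1 - x*q^i)) * (1 - x*q^j)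
        = qPoch x q (n+1) := by
      rw [qPoch]; exact Finset.prod_erase_mul _ _ hj
    rw [← hsp, mul_comm (∏ i ∈ (Finset.range (n+1)).erase j, (1 - x*q^i)) (1 - x*q^j),
      ← mul_assoc, mul_assoc _ (1 - x*q^j)⁻¹ (1 - x*q^j), inv_mul_cancel₀ (hx' j hj), mul_one]
  have hsum := Finset.sum_congr rfl key
  rw [← Finset.sum_mul, pf q x hq hq1 n] at hsum
  exact inv_eq_of_mul_eq_one_left hsum

lemma zpow_sub_helper (p : ℂ) (hp : p ≠ 0) (a s k : ℕ) :
    p^((a:ℤ) - (s:ℤ)*k) = p^a * ((p^k)^s)⁻¹ := by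
  rw [zpow_sub₀ hp, zpow_natCast, div_eq_mul_inv]
  congr 2
  rw [show (s:ℤ)*(k:ℤ) = ((s*k : ℕ):ℤ) from by push_cast; ring, zpow_natCast, pow_mul']

lemma zpow_add_helper (q : ℂ) (a s k : ℕ) :
    q^((a:ℤ) + (s:ℤ)*k) = q^a * (q^k)^s := by
  rw [show (a:ℤ) + (s:ℤ)*(k:ℤ) = ((a + s*k : ℕ):ℤ) from by push_cast; ring, zpow_natCast,
    pow_add, pow_mul']


/-- Theorem 1.1: the bibasic identity with parameter `r`. -/
theorem stmt1 (m n r : ℕ) (hr : r ≤ m) (x p q : ℂ) (hp : p ≠ 0) (hq : q ≠ 0)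
    (hp1 : ∀ j, 1 ≤ j → p ^ j ≠ 1) (hq1 : ∀ j, 1 ≤ j → q ^ j ≠ 1)
    (hx1 : ∀ k ≤ m, qPoch (x * p ^ k) q (n + 1) ≠ 0)
    (hx2 : ∀ k ≤ n, qPoch (x * q ^ k) p (m + 1) ≠ 0) :
    ∑ k ∈ Finset.range (m + 1),
        (-1 : ℂ) ^ k * p ^ (((k * (k + 1) / 2 : ℕ) : ℤ) - (r : ℤ) * k) /
          (qPoch p p k * qPoch p p (m - k) * qPoch (x * p ^ k) q (n + 1))
      = x ^ r * ∑ k ∈ Finset.range (n + 1),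
          (-1 : ℂ) ^ k * q ^ (((k * (k + 1) / 2 : ℕ) : ℤ) + (r : ℤ) * k) /
            (qPoch q q k * qPoch q q (n - k) * qPoch (x * q ^ k) p (m + 1)) := by
  have hfacL : ∀ k ∈ Finset.range (m+1), ∀ b ∈ Finset.range (n+1),
      (1:ℂ) - x * p^k * q^b ≠ 0 := by
    intro k hk b hb
    rw [Finset.mem_range] at hk
    have h := hx1 k (by omega)
    rw [qPoch] at h
    exact Finset.prod_ne_zero_iff.mp h b hb
  have L : ∑ k ∈ Finset.range (m + 1),
        (-1 : ℂ) ^ k * p ^ (((k * (k + 1) / 2 : ℕ) : ℤ) - (r : ℤ) * k) /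
          (qPoch p p k * qPoch p p (m - k) * qPoch (x * p ^ k) q (n + 1))
      = ∑ k ∈ Finset.range (m+1), ∑ b ∈ Finset.range (n+1),
          ((-1:ℂ)^k * p^(((k*(k+1)/2 : ℕ):ℤ) - (r:ℤ)*k) / (qPoch p p k * qPoch p p (m-k)))
            * (((-1:ℂ)^b * q^(b*(b+1)/2) / (qPoch q q b * qPoch q q (n-b)))
               * (1 - (x*p^k) * q^b)⁻¹) := by
    apply Finset.sum_congr rfl
    intro k hk
    rw [Finset.mem_range] at hk
    rw [← Finset.mul_sum, ← pf_div q (x*p^k) hq hq1 n (hx1 k (by omega)), ← div_div,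
      div_eq_mul_inv]
  have R : x ^ r * ∑ k ∈ Finset.range (n + 1),
          (-1 : ℂ) ^ k * q ^ (((k * (k + 1) / 2 : ℕ) : ℤ) + (r : ℤ) * k) /
            (qPoch q q k * qPoch q q (n - k) * qPoch (x * q ^ k) p (m + 1))
      = ∑ b ∈ Finset.range (n+1), ∑ k ∈ Finset.range (m+1),
          x^r * ((-1:ℂ)^b * q^(((b*(b+1)/2 : ℕ):ℤ) + (r:ℤ)*b) / (qPoch q q b * qPoch q q (n-b)))
            * (((-1:ℂ)^k * p^(k*(k+1)/2) / (qPoch p p k * qPoch p p (m-k)))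
               * (1 - (x*q^b) * p^k)⁻¹) := by
    rw [Finset.mul_sum]
    apply Finset.sum_congr rfl
    intro b hb
    rw [Finset.mem_range] at hb
    rw [← div_div, div_eq_mul_inv, pf_div p (x*q^b) hp hp1 m (hx2 b (by omega)),
      Finset.mul_sum, Finset.mul_sum]
    apply Finset.sum_congr rfl
    intro k _
    ring
  rw [L, R, Finset.sum_comm, ← sub_eq_zero, ← Finset.sum_sub_distrib]
  refine Finset.sum_eq_zero ?_
  intro b hb
  rw [← Finset.sum_sub_distrib]
  have key2 : ∀ k ∈ Finset.range (m+1),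
      ((-1:ℂ)^k * p^(((k*(k+1)/2 : ℕ):ℤ) - (r:ℤ)*k) / (qPoch p p k * qPoch p p (m-k)))
        * (((-1:ℂ)^b * q^(b*(b+1)/2) / (qPoch q q b * qPoch q q (n-b)))
           * (1 - (x*p^k) * q^b)⁻¹)
      - x^r * ((-1:ℂ)^b * q^(((b*(b+1)/2 : ℕ):ℤ) + (r:ℤ)*b) / (qPoch q q b * qPoch q q (n-b)))
          * (((-1:ℂ)^k * p^(k*(k+1)/2) / (qPoch p p k * qPoch p p (m-k)))
             * (1 - (x*q^b) * p^k)⁻¹)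
      = ∑ i ∈ Finset.range r,
          ((-1:ℂ)^k * p^(((k*(k+1)/2 : ℕ):ℤ) - ((r-i : ℕ):ℤ)*k)
              / (qPoch p p k * qPoch p p (m-k)))
            * (((-1:ℂ)^b * q^(((b*(b+1)/2 : ℕ):ℤ) + (i:ℤ)*b)
              / (qPoch q q b * qPoch q q (n-b))) * x^i) := by
    intro k hk
    have hy : (1:ℂ) - x * p^k * q^b ≠ 0 := hfacL k hk b hb
    have hPk := qPoch_pp_ne_zero p hp1 k
    have hPmk := qPoch_pp_ne_zero p hp1 (m-k)
    have hQb := qPoch_pp_ne_zero q hq1 b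
    have hQnb := qPoch_pp_ne_zero q hq1 (n-b)
    have hpk : (p:ℂ)^k ≠ 0 := pow_ne_zero _ hp
    have step : ∀ i ∈ Finset.range r,
        ((-1:ℂ)^k * p^(((k*(k+1)/2 : ℕ):ℤ) - ((r-i : ℕ):ℤ)*k)
            / (qPoch p p k * qPoch p p (m-k)))
          * (((-1:ℂ)^b * q^(((b*(b+1)/2 : ℕ):ℤ) + (i:ℤ)*b)
            / (qPoch q q b * qPoch q q (n-b))) * x^i)
        = ((-1:ℂ)^k * (-1:ℂ)^b * p^(k*(k+1)/2) * q^(b*(b+1)/2) * (((p^k)^r)⁻¹)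
            / (qPoch p p k * qPoch p p (m-k) * (qPoch q q b * qPoch q q (n-b))))
          * (x * p^k * q^b)^i := by
      intro i hi
      rw [Finset.mem_range] at hi
      rw [zpow_sub_helper p hp (k*(k+1)/2) (r-i) k, zpow_add_helper q (b*(b+1)/2) i b,
        mul_pow, mul_pow]
      have hsplit : ((p:ℂ)^k)^(r-i) * ((p:ℂ)^k)^i = ((p:ℂ)^k)^r := by
        rw [← pow_add]; congr 1; omega
      field_simp
      linear_combination (-x^i) * hsplit
    rw [Finset.sum_congr rfl step, ← Finset.mul_sum]
    rw [zpow_sub_helper p hp (k*(k+1)/2) r k, zpow_add_helper q (b*(b+1)/2) r b,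
      show x*q^b*p^k = x*p^k*q^b from by ring]
    have hgeom := geom_sum_mul (x*p^k*q^b) r
    have hB : ((p:ℂ)^k)^r ≠ 0 := pow_ne_zero _ hpk
    have h1 : (((p:ℂ)^k)^r)⁻¹ - x^r * ((q^b)^r)
        = (((p:ℂ)^k)^r)⁻¹ * ((1 - x*p^k*q^b) * ∑ i ∈ Finset.range r, (x*p^k*q^b)^i) := by
      have h2 : (1 - x*p^k*q^b) * ∑ i ∈ Finset.range r, (x*p^k*q^b)^i
          = 1 - (x*p^k*q^b)^r := by linear_combination -hgeom
      rw [h2]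
      field_simp
      ring
    have hinv : (((p:ℂ)^k)^r)⁻¹ * (1 - x*p^k*q^b)⁻¹
        - x^r * ((q^b)^r) * (1 - x*p^k*q^b)⁻¹
        = (((p:ℂ)^k)^r)⁻¹ * ∑ i ∈ Finset.range r, (x*p^k*q^b)^i := by
      calc (((p:ℂ)^k)^r)⁻¹ * (1 - x*p^k*q^b)⁻¹ - x^r * ((q^b)^r) * (1 - x*p^k*q^b)⁻¹
          = ((((p:ℂ)^k)^r)⁻¹ - x^r * ((q^b)^r)) * (1 - x*p^k*q^b)⁻¹ := by ring
        _ = ((((p:ℂ)^k)^r)⁻¹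
              * ((1 - x*p^k*q^b) * ∑ i ∈ Finset.range r, (x*p^k*q^b)^i))
              * (1 - x*p^k*q^b)⁻¹ := by rw [h1]
        _ = (((p:ℂ)^k)^r)⁻¹ * ∑ i ∈ Finset.range r, (x*p^k*q^b)^i := by
              rw [mul_comm (1 - x*p^k*q^b), ← mul_assoc, mul_inv_cancel_right₀ hy]
    linear_combination ((-1:ℂ)^k * (-1:ℂ)^b * p^(k*(k+1)/2) * q^(b*(b+1)/2)
      / (qPoch p p k * qPoch p p (m-k) * (qPoch q q b * qPoch q q (n-b)))) * hinv
  rw [Finset.sum_congr rfl key2, Finset.sum_comm]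
  refine Finset.sum_eq_zero ?_
  intro i hi
  rw [Finset.mem_range] at hi
  rw [← Finset.sum_mul, vanish p hp hp1 m (r-i) (by omega) (by omega), zero_mul]
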